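/- Let T = ⟨Γ, L, R⟩ be an incremental rule system on presheaves over a small category C, with Γ small. Then T is a global transformation: for every monomorphism h : p ⟶ p' of presheaves, the induced morphism T̄(h) : T̄(p) ⟶ T̄(p') — the unique morphism satisfying T̄(h) ∘ ι_{⟨γ,m⟩} = ι'_{⟨γ, h∘m⟩} for every object ⟨γ, m⟩ of L/p, where ι and ι' are the colimit components of T̄(p) and T̄(p') respectively — is a monomorphism. -/

import Mathlib

open CategoryTheory CategoryTheory.Limits

universe u

variable (C : Type u) [SmallCategory C]

/-- The category of presheaves over `C`. -/
abbrev GM := Cᵒᵖ ⥤ Type u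

/-- A rule system `⟨Γ, L, R⟩` on presheaves over `C`: a small category `Γ` of rules,
a full and faithful left-hand-side functor `L` sending every morphism to a monomorphism,
and a right-hand-side functor `R` sending every morphism to a monomorphism. -/
structure RuleSystem where
  Γ : Type u
  [catΓ : SmallCategory Γ]
  L : Γ ⥤ GM C
  R : Γ ⥤ GM C
  [fullL : L.Full]
  [faithfulL : L.Faithful]
  monoL : ∀ {a b : Γ} (e : a ⟶ b), Mono (L.map e)
  monoR : ∀ {a b : Γ} (e : a ⟶ b), Mono (R.map e)

attribute [instance] RuleSystem.catΓ RuleSystem.fullL RuleSystem.faithfulL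

variable {C}

/-- The instance category `L/p`: objects are pairs `⟨γ, m⟩` with `m : L(γ) ⟶ p` a
monomorphism; morphisms `⟨γ, m⟩ ⟶ ⟨γ', m'⟩` are the morphisms `e : γ ⟶ γ'` of `Γ` with
`m' ∘ L(e) = m`. -/
def Inst (T : RuleSystem C) (p : GM C) :=
  ObjectProperty.FullSubcategory (fun f : CostructuredArrow T.L p => Mono f.hom)

instance (T : RuleSystem C) (p : GM C) : Category (Inst T p) :=
  ObjectProperty.FullSubcategory.category _

/-- The diagram `D_T(p) : L/p ⥤ GM` sending `⟨γ, m⟩` to `R(γ)` and `e` to `R(e)`. -/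
def DT (T : RuleSystem C) (p : GM C) : Inst T p ⥤ GM C :=
  ObjectProperty.ι _ ⋙ CostructuredArrow.proj T.L p ⋙ T.R

/-- `f` is "the induced morphism `T̄(h) : T̄(p) ⟶ T̄(p')`" for a monomorphism `h : p ⟶ p'`:
it satisfies `T̄(h) ∘ ι_{⟨γ,m⟩} = ι'_{⟨γ, h ∘ m⟩}` for every object `⟨γ, m⟩` of `L/p`,
where `ι`, `ι'` are the colimit components of `T̄(p) = colimit (DT T p)` and
`T̄(p') = colimit (DT T p')`. -/
def IsTbarMap (T : RuleSystem C) {p p' : GM C} (h : p ⟶ p') [Mono h]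
    (f : colimit (DT T p) ⟶ colimit (DT T p')) : Prop :=
  ∀ n : Inst T p,
    colimit.ι (DT T p) n ≫ f =
      colimit.ι (DT T p')
        ⟨CostructuredArrow.mk (n.1.hom ≫ h), by haveI := n.2; exact mono_comp _ _⟩

namespace Stmt7Proof
variable {T : RuleSystem C} {p : GM C}

def instγ {a b : Inst T p} (e : a ⟶ b) : a.1.left ⟶ b.1.left :=
  CommaMorphism.left ((ObjectProperty.ι _).map e)

lemma DT_map {a b : Inst T p} (e : a ⟶ b) :
    (DT T p).map e = T.R.map (instγ e) := rfl

lemma inst_w {a b : Inst T p} (e : a ⟶ b) :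
    T.L.map (instγ e) ≫ b.1.hom = a.1.hom :=
  CostructuredArrow.w ((ObjectProperty.ι _).map e)

def instHomMk {a b : Inst T p} (g : a.1.left ⟶ b.1.left)
    (w : T.L.map g ≫ b.1.hom = a.1.hom) : a ⟶ b :=
  ObjectProperty.homMk (CostructuredArrow.homMk g w)

lemma instγ_instHomMk {a b : Inst T p} (g : a.1.left ⟶ b.1.left) (w) :
    instγ (instHomMk g w) = g := rfl

lemma instγ_comp {a b c : Inst T p} (e : a ⟶ b) (e' : b ⟶ c) :
    instγ (e ≫ e') = instγ e ≫ instγ e' := rfl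

lemma instγ_id (a : Inst T p) : instγ (𝟙 a) = 𝟙 a.1.left := rfl

lemma span_of_eqvGen (T : RuleSystem C)
    (hinc : ∀ {γ₁ γ γ₂ : T.Γ} (i₁ : γ₁ ⟶ γ) (i₂ : γ₂ ⟶ γ) (c : C)
      (x₁ : yoneda.obj c ⟶ T.R.obj γ₁) (x₂ : yoneda.obj c ⟶ T.R.obj γ₂),
      x₁ ≫ T.R.map i₁ = x₂ ≫ T.R.map i₂ →
      ∃ (γ' : T.Γ) (π₁ : γ' ⟶ γ₁) (π₂ : γ' ⟶ γ₂) (x : yoneda.obj c ⟶ T.R.obj γ'),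
        π₁ ≫ i₁ = π₂ ≫ i₂ ∧ x ≫ T.R.map π₁ = x₁ ∧ x ≫ T.R.map π₂ = x₂)
    {q : GM C} (k : Cᵒᵖ)
    {a b : Σ n : Inst T q, (DT T q ⋙ (evaluation Cᵒᵖ (Type u)).obj k).obj n}
    (hab : Relation.EqvGen
      (Functor.ColimitTypeRel (DT T q ⋙ (evaluation Cᵒᵖ (Type u)).obj k)) a b) :
    ∃ (s : Inst T q) (e₁ : s ⟶ a.1) (e₂ : s ⟶ b.1)
      (x : (T.R.obj s.1.left).obj k),
      (T.R.map (instγ e₁)).app k x = a.2 ∧ (T.R.map (instγ e₂)).app k x = b.2 := by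
  induction hab with
  | rel a b r =>
    obtain ⟨g, hg⟩ := r
    refine ⟨a.1, 𝟙 _, g, a.2, ?_, ?_⟩
    · rw [instγ_id]; simp; rfl
    · exact hg.symm
  | refl a =>
    refine ⟨a.1, 𝟙 _, 𝟙 _, a.2, ?_, ?_⟩ <;> (rw [instγ_id]; simp; rfl)
  | symm a b _ ih =>
    obtain ⟨s, e₁, e₂, x, h1, h2⟩ := ih
    exact ⟨s, e₂, e₁, x, h2, h1⟩
  | trans a b c _ _ ih₁ ih₂ =>
    obtain ⟨s, e₁, e₂, xs, hs1, hs2⟩ := ih₁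
    obtain ⟨t, d₁, d₂, xt, ht1, ht2⟩ := ih₂
    obtain ⟨γ', π₁, π₂, x, hsq, hx₁, hx₂⟩ :=
      hinc (instγ e₂) (instγ d₁) k.unop (yonedaEquiv.symm xs) (yonedaEquiv.symm xt)
        (by
          rw [yonedaEquiv_symm_naturality_right, yonedaEquiv_symm_naturality_right]
          exact congrArg _ (hs2.trans ht1.symm))
    haveI := T.monoL π₁
    haveI := s.2
    have w1 : T.L.map π₂ ≫ t.1.hom = T.L.map π₁ ≫ s.1.hom := by
      rw [← inst_w d₁, ← inst_w e₂, ← Category.assoc, ← Category.assoc,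
        ← T.L.map_comp, ← T.L.map_comp, hsq]
    refine ⟨⟨CostructuredArrow.mk (T.L.map π₁ ≫ s.1.hom), mono_comp _ _⟩,
      instHomMk π₁ rfl ≫ e₁, instHomMk π₂ w1 ≫ d₂, yonedaEquiv x, ?_, ?_⟩
    · have key : (T.R.map π₁).app k (yonedaEquiv x) = xs := by
        have h' := congrArg yonedaEquiv hx₁
        rw [yonedaEquiv_comp] at h'
        simpa using h'
      change (T.R.map (π₁ ≫ instγ e₁)).app k (yonedaEquiv x) = _
      rw [T.R.map_comp, FunctorToTypes.comp]
      exact (congrArg ((T.R.map (instγ e₁)).app k) key).trans hs1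
    · have key : (T.R.map π₂).app k (yonedaEquiv x) = xt := by
        have h' := congrArg yonedaEquiv hx₂
        rw [yonedaEquiv_comp] at h'
        simpa using h'
      change (T.R.map (π₂ ≫ instγ d₂)).app k (yonedaEquiv x) = _
      rw [T.R.map_comp, FunctorToTypes.comp]
      exact (congrArg ((T.R.map (instγ d₂)).app k) key).trans ht2

end Stmt7Proof

open Stmt7Proof

/-- an incremental rule system is a global transformation: for every
monomorphism `h : p ⟶ p'` of presheaves, the induced morphism `T̄(h) : T̄(p) ⟶ T̄(p')`
(the unique morphism satisfying `T̄(h) ∘ ι_{⟨γ,m⟩} = ι'_{⟨γ, h∘m⟩}` for every object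
`⟨γ, m⟩` of `L/p`) is a monomorphism. -/
theorem stmt7 (T : RuleSystem C)
    (hinc : ∀ {γ₁ γ γ₂ : T.Γ} (i₁ : γ₁ ⟶ γ) (i₂ : γ₂ ⟶ γ) (c : C)
      (x₁ : yoneda.obj c ⟶ T.R.obj γ₁) (x₂ : yoneda.obj c ⟶ T.R.obj γ₂),
      x₁ ≫ T.R.map i₁ = x₂ ≫ T.R.map i₂ →
      ∃ (γ' : T.Γ) (π₁ : γ' ⟶ γ₁) (π₂ : γ' ⟶ γ₂) (x : yoneda.obj c ⟶ T.R.obj γ'),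
        π₁ ≫ i₁ = π₂ ≫ i₂ ∧ x ≫ T.R.map π₁ = x₁ ∧ x ≫ T.R.map π₂ = x₂)
    {p p' : GM C} (h : p ⟶ p') [Mono h]
    (f : colimit (DT T p) ⟶ colimit (DT T p')) (hf : IsTbarMap T h f) :
    Mono f := by
  have key : ∀ k : Cᵒᵖ, Mono (f.app k) := by
    intro k
    rw [CategoryTheory.mono_iff_injective]
    intro A B hAB
    obtain ⟨n₁, x₁, hA⟩ :=
      Types.jointly_surjective' ((colimitObjIsoColimitCompEvaluation (DT T p) k).hom A)
    obtain ⟨n₂, x₂, hB⟩ :=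
      Types.jointly_surjective' ((colimitObjIsoColimitCompEvaluation (DT T p) k).hom B)
    have hA' : (colimit.ι (DT T p) n₁).app k x₁ = A := by
      have h1 := ConcreteCategory.congr_hom (colimitObjIsoColimitCompEvaluation_ι_inv (DT T p) n₁ k) x₁
      rw [types_comp_apply] at h1
      rw [← h1, hA]
      exact (colimitObjIsoColimitCompEvaluation (DT T p) k).hom_inv_id_apply A
    have hB' : (colimit.ι (DT T p) n₂).app k x₂ = B := by
      have h1 := ConcreteCategory.congr_hom (colimitObjIsoColimitCompEvaluation_ι_inv (DT T p) n₂ k) x₂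
      rw [types_comp_apply] at h1
      rw [← h1, hB]
      exact (colimitObjIsoColimitCompEvaluation (DT T p) k).hom_inv_id_apply B
    haveI := n₁.2
    haveI := n₂.2
    have hcol : colimit.ι (DT T p' ⋙ (evaluation Cᵒᵖ (Type u)).obj k)
          (⟨CostructuredArrow.mk (n₁.1.hom ≫ h), mono_comp _ _⟩ : Inst T p') x₁
        = colimit.ι (DT T p' ⋙ (evaluation Cᵒᵖ (Type u)).obj k)
          (⟨CostructuredArrow.mk (n₂.1.hom ≫ h), mono_comp _ _⟩ : Inst T p') x₂ := by
      have g1 := ConcreteCategory.congr_hom (colimitObjIsoColimitCompEvaluation_ι_app_hom (DT T p')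
        (⟨CostructuredArrow.mk (n₁.1.hom ≫ h), mono_comp _ _⟩ : Inst T p') k) x₁
      have g2 := ConcreteCategory.congr_hom (colimitObjIsoColimitCompEvaluation_ι_app_hom (DT T p')
        (⟨CostructuredArrow.mk (n₂.1.hom ≫ h), mono_comp _ _⟩ : Inst T p') k) x₂
      erw [types_comp_apply] at g1 g2
      rw [← g1, ← g2]
      have e1 : (colimit.ι (DT T p')
          (⟨CostructuredArrow.mk (n₁.1.hom ≫ h), mono_comp _ _⟩ : Inst T p')).app k x₁
          = f.app k A := by
        rw [← hA', ← FunctorToTypes.comp, hf n₁]; rfl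
      have e2 : (colimit.ι (DT T p')
          (⟨CostructuredArrow.mk (n₂.1.hom ≫ h), mono_comp _ _⟩ : Inst T p')).app k x₂
          = f.app k B := by
        rw [← hB', ← FunctorToTypes.comp, hf n₂]; rfl
      rw [e1, e2, hAB]
    obtain ⟨s, e₁, e₂, xs, hx1, hx2⟩ := span_of_eqvGen T hinc k (Types.colimit_eq hcol)
    let g1 := instγ e₁
    let g2 := instγ e₂
    haveI := T.monoL g1
    have w2 : T.L.map g2 ≫ n₂.1.hom = T.L.map g1 ≫ n₁.1.hom := by
      rw [← cancel_mono h, Category.assoc, Category.assoc]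
      have u1 : T.L.map g1 ≫ (n₁.1.hom ≫ h) = s.1.hom := inst_w e₁
      have u2 : T.L.map g2 ≫ (n₂.1.hom ≫ h) = s.1.hom := inst_w e₂
      rw [u1, u2]
    have q1 := Types.colimit_sound (F := DT T p ⋙ (evaluation Cᵒᵖ (Type u)).obj k)
      (instHomMk
        (a := ⟨CostructuredArrow.mk (T.L.map g1 ≫ n₁.1.hom), mono_comp _ _⟩)
        (b := n₁) g1 rfl) hx1
    have q2 := Types.colimit_sound (F := DT T p ⋙ (evaluation Cᵒᵖ (Type u)).obj k)
      (instHomMk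
        (a := ⟨CostructuredArrow.mk (T.L.map g1 ≫ n₁.1.hom), mono_comp _ _⟩)
        (b := n₂) g2 w2) hx2
    rw [← hA', ← hB']
    have r1 := ConcreteCategory.congr_hom (colimitObjIsoColimitCompEvaluation_ι_inv (DT T p) n₁ k) x₁
    have r2 := ConcreteCategory.congr_hom (colimitObjIsoColimitCompEvaluation_ι_inv (DT T p) n₂ k) x₂
    rw [types_comp_apply] at r1 r2
    rw [← r1, ← r2]
    exact congrArg (colimitObjIsoColimitCompEvaluation (DT T p) k).inv (q1.symm.trans q2)
  haveI := key
  exact NatTrans.mono_of_mono_app f
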